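/- Let M = (M_k) be a quasianalytic regular weight sequence and f ∈ A_{n-1}^{M}(ℝⁿ) \ A_n^{M}(ℝⁿ) for some n ≥ 2. Then for every k ≥ 1 the function f̃ on ℝ^{n+k} defined by f̃(x_1, …, x_n, x_{n+1}, …, x_{n+k}) := f(x_1, …, x_n) belongs to A_{n-1}^{M}(ℝ^{n+k}) but not to A_n^{M}(ℝ^{n+k}). -/

import Mathlib

open Filter Metric Set Asymptotics
open scoped BigOperators Topology NNReal

noncomputable section

/-- ℝⁿ with the Euclidean norm. -/
abbrev Euc (n : ℕ) := EuclideanSpace ℝ (Fin n)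

/-- First-order partial derivative in the `i`-th coordinate direction. -/
def pder {n : ℕ} (i : Fin n) (f : Euc n → ℝ) : Euc n → ℝ :=
  fun x => fderiv ℝ f x (EuclideanSpace.single i 1)

/-- The multi-index partial derivative `∂^α f`. -/
def pderM {n : ℕ} (α : Fin n → ℕ) (f : Euc n → ℝ) : Euc n → ℝ :=
  (List.finRange n).foldr (fun i g => (pder i)^[α i] g) f

/-- `|α| = ∑ i, α i`. -/
def mdeg {n : ℕ} (α : Fin n → ℕ) : ℕ := ∑ i, α i

/-- `‖f‖^M_{K,ρ} ≤ C`, spelled out: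
`|∂^α f(x)| ≤ C ρ^{|α|} |α|! M_{|α|}` for all `x ∈ K` and multi-indices `α`. -/
def DCBound {n : ℕ} (M : ℕ → ℝ) (f : Euc n → ℝ) (K : Set (Euc n)) (ρ C : ℝ) : Prop :=
  ∀ x ∈ K, ∀ α : Fin n → ℕ,
    |pderM α f x| ≤ C * ρ ^ mdeg α * (mdeg α).factorial * M (mdeg α)

/-- `‖f‖^M_{K,ρ} < ∞`. -/
def DCFinite {n : ℕ} (M : ℕ → ℝ) (f : Euc n → ℝ) (K : Set (Euc n)) (ρ : ℝ) : Prop :=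
  ∃ C : ℝ, DCBound M f K ρ C

/-- The Denjoy–Carleman class of Roumieu type `E^{M}(U)`. -/
def Roumieu {n : ℕ} (M : ℕ → ℝ) (U : Set (Euc n)) (f : Euc n → ℝ) : Prop :=
  ContDiffOn ℝ (⊤ : ℕ∞) f U ∧
  ∀ K : Set (Euc n), K ⊆ U → IsCompact K → ∃ ρ > 0, DCFinite M f K ρ

/-- The Denjoy–Carleman class of Beurling type `E^{(M)}(U)`. -/
def Beurling {n : ℕ} (M : ℕ → ℝ) (U : Set (Euc n)) (f : Euc n → ℝ) : Prop :=
  ContDiffOn ℝ (⊤ : ℕ∞) f U ∧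
  ∀ K : Set (Euc n), K ⊆ U → IsCompact K → ∀ ρ > 0, DCFinite M f K ρ

/-- A regular weight sequence. -/
def RegularWeightSeq (M : ℕ → ℝ) : Prop :=
  (∀ k, 0 < M k) ∧
  (∀ k : ℕ, 1 ≤ k → (M k) ^ 2 ≤ M (k - 1) * M (k + 1)) ∧
  M 0 = 1 ∧ 1 ≤ M 1 ∧
  Tendsto (fun k : ℕ => (M k) ^ ((k : ℝ)⁻¹)) atTop atTop

/-- Quasianalyticity of a weight sequence: `∑ M_k/((k+1) M_{k+1}) = ∞`. -/
def QAseq (M : ℕ → ℝ) : Prop :=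
  ¬ Summable (fun k : ℕ => M k / ((k + 1) * M (k + 1)))

/-- `p : V → ℝⁿ` is an `E^{M}`-plot (Roumieu type): `V` is open and all
component functions of `p` belong to `E^{M}(V)`. -/
def RoumieuPlot {m n : ℕ} (M : ℕ → ℝ) (V : Set (Euc m)) (p : Euc m → Euc n) : Prop :=
  IsOpen V ∧ ∀ j : Fin n, Roumieu M V (fun x => p x j)

/-- `p : V → ℝⁿ` is an `E^{(M)}`-plot (Beurling type). -/
def BeurlingPlot {m n : ℕ} (M : ℕ → ℝ) (V : Set (Euc m)) (p : Euc m → Euc n) : Prop :=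
  IsOpen V ∧ ∀ j : Fin n, Beurling M V (fun x => p x j)

/-- `φ(t) = ω(e^t)`. -/
def youngPhi (ω : ℝ → ℝ) (t : ℝ) : ℝ := ω (Real.exp t)

/-- The Young conjugate `φ*(t) = sup_{s ≥ 0} (st - φ(s))`. -/
def youngStar (ω : ℝ → ℝ) (t : ℝ) : ℝ := ⨆ s : Ici (0 : ℝ), ((s : ℝ) * t - youngPhi ω s)

/-- A weight function in the sense of Braun–Meise–Taylor. -/
def WeightFunction (ω : ℝ → ℝ) : Prop :=
  ContinuousOn ω (Ici 0) ∧ MonotoneOn ω (Ici 0) ∧ ω 0 = 0 ∧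
  Tendsto ω atTop atTop ∧
  ((fun t => ω (2 * t)) =O[atTop] ω) ∧
  (ω =O[atTop] fun t => t) ∧
  (Real.log =o[atTop] ω) ∧
  ConvexOn ℝ univ (youngPhi ω)

/-- Quasianalyticity of a weight function: `∫_0^∞ ω(t)/(1+t²) dt = ∞`. -/
def QAweight (ω : ℝ → ℝ) : Prop :=
  ¬ MeasureTheory.IntegrableOn (fun t => ω t / (1 + t ^ 2)) (Ioi 0)

/-- `‖f‖^ω_{K,ρ} ≤ C`. -/
def OmBound {n : ℕ} (ω : ℝ → ℝ) (f : Euc n → ℝ) (K : Set (Euc n)) (ρ C : ℝ) : Prop :=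
  ∀ x ∈ K, ∀ α : Fin n → ℕ,
    |pderM α f x| ≤ C * Real.exp ((1 / ρ) * youngStar ω (ρ * (mdeg α : ℝ)))

/-- `‖f‖^ω_{K,ρ} < ∞`. -/
def OmFinite {n : ℕ} (ω : ℝ → ℝ) (f : Euc n → ℝ) (K : Set (Euc n)) (ρ : ℝ) : Prop :=
  ∃ C : ℝ, OmBound ω f K ρ C

/-- The Braun–Meise–Taylor class of Roumieu type `E^{ω}(U)`. -/
def RoumieuW {n : ℕ} (ω : ℝ → ℝ) (U : Set (Euc n)) (f : Euc n → ℝ) : Prop :=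
  ContDiffOn ℝ (⊤ : ℕ∞) f U ∧
  ∀ K : Set (Euc n), K ⊆ U → IsCompact K → ∃ ρ > 0, OmFinite ω f K ρ

/-- The Braun–Meise–Taylor class of Beurling type `E^{(ω)}(U)`. -/
def BeurlingW {n : ℕ} (ω : ℝ → ℝ) (U : Set (Euc n)) (f : Euc n → ℝ) : Prop :=
  ContDiffOn ℝ (⊤ : ℕ∞) f U ∧
  ∀ K : Set (Euc n), K ⊆ U → IsCompact K → ∀ ρ > 0, OmFinite ω f K ρ

/-- An `E^{ω}`-plot (Roumieu type). -/
def RoumieuWPlot {m n : ℕ} (ω : ℝ → ℝ) (V : Set (Euc m)) (p : Euc m → Euc n) : Prop :=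
  IsOpen V ∧ ∀ j : Fin n, RoumieuW ω V (fun x => p x j)

/-- An `E^{(ω)}`-plot (Beurling type). -/
def BeurlingWPlot {m n : ℕ} (ω : ℝ → ℝ) (V : Set (Euc m)) (p : Euc m → Euc n) : Prop :=
  IsOpen V ∧ ∀ j : Fin n, BeurlingW ω V (fun x => p x j)

/-- `|K| = sup_{x ∈ K} |x|`. -/
def supNorm {n : ℕ} (K : Set (Euc n)) : ℝ := ⨆ x : K, ‖(x : Euc n)‖

/-- The class `E^{M}(ℝ)` for functions of one real variable. -/
def Roumieu1 (M : ℕ → ℝ) (g : ℝ → ℝ) : Prop :=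
  ContDiff ℝ (⊤ : ℕ∞) g ∧
  ∀ K : Set ℝ, IsCompact K → ∃ ρ > 0, ∃ C : ℝ, ∀ t ∈ K, ∀ k : ℕ,
    |iteratedDeriv k g t| ≤ C * ρ ^ k * k.factorial * M k

/-- The class `A_m^{M}(U)`: smooth functions on `U` which are of class `E^{M}`
along every `m`-dimensional `E^{M}`-plot in `U`. -/
def AClass {n : ℕ} (M : ℕ → ℝ) (m : ℕ) (U : Set (Euc n)) (f : Euc n → ℝ) : Prop :=
  ContDiffOn ℝ (⊤ : ℕ∞) f U ∧
  ∀ (V : Set (Euc m)) (p : Euc m → Euc n), IsOpen V → MapsTo p V U →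
    (∀ j : Fin n, Roumieu M V (fun x => p x j)) → Roumieu M V (f ∘ p)

end


section Aux

lemma pder_zero {n : ℕ} (i : Fin n) : pder i (fun _ => (0:ℝ)) = fun _ => 0 := by
  funext x; simp [pder]

lemma iterate_pder_zero {n : ℕ} (i : Fin n) (m : ℕ) :
    (pder i)^[m] (fun _ => (0:ℝ)) = fun _ => 0 := by
  induction m with
  | zero => rfl
  | succ m ih => rw [Function.iterate_succ_apply, pder_zero, ih]

lemma foldr_pder_zero {n : ℕ} (α : Fin n → ℕ) (l : List (Fin n)) :
    l.foldr (fun i g => (pder i)^[α i] g) (fun _ => (0:ℝ)) = fun _ => 0 := by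
  induction l with
  | nil => rfl
  | cons a l ih => rw [List.foldr_cons, ih, iterate_pder_zero]

lemma pderM_zero {n : ℕ} (α : Fin n → ℕ) : pderM α (fun _ => (0:ℝ)) = fun _ => 0 :=
  foldr_pder_zero α _

lemma roumieu_zero {m : ℕ} (M : ℕ → ℝ) (V : Set (Euc m)) :
    Roumieu M V (fun _ => (0:ℝ)) := by
  refine ⟨contDiffOn_const, fun K _ _ => ⟨1, one_pos, 0, fun x _ α => ?_⟩⟩
  rw [pderM_zero]
  simp

end Aux

/-- Adding dummy variables preserves membership in `A_{n-1}^{M}` and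
non-membership in `A_n^{M}`. -/
theorem statement14 (M : ℕ → ℝ) (hM : RegularWeightSeq M) (hQA : QAseq M)
    (n : ℕ) (hn : 2 ≤ n) (f : Euc n → ℝ)
    (hf1 : AClass M (n - 1) (Set.univ : Set (Euc n)) f)
    (hf2 : ¬ AClass M n (Set.univ : Set (Euc n)) f)
    (k : ℕ) (hk : 1 ≤ k) :
    letI ftil : Euc (n + k) → ℝ := fun x =>
      f ((WithLp.equiv 2 (Fin n → ℝ)).symm fun i : Fin n => x (Fin.castAdd k i))
    AClass M (n - 1) (Set.univ : Set (Euc (n + k))) ftil ∧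
      ¬ AClass M n (Set.univ : Set (Euc (n + k))) ftil := by
  set ftil : Euc (n + k) → ℝ := fun x =>
    f ((WithLp.equiv 2 (Fin n → ℝ)).symm fun i : Fin n => x (Fin.castAdd k i)) with hftil
  -- the projection map
  set π : Euc (n + k) → Euc n := fun x =>
    (WithLp.equiv 2 (Fin n → ℝ)).symm fun i : Fin n => x (Fin.castAdd k i) with hπ
  have hπsmooth : ContDiff ℝ (⊤ : ℕ∞) π := by
    apply contDiff_euclidean.mpr
    intro i
    exact (EuclideanSpace.proj (𝕜 := ℝ) (Fin.castAdd k i)).contDiff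
  have hfsmooth : ContDiff ℝ (⊤ : ℕ∞) f := contDiffOn_univ.mp hf1.1
  constructor
  · refine ⟨contDiffOn_univ.mpr (hfsmooth.comp hπsmooth), ?_⟩
    intro V p hV _ hp
    have := hf1.2 V (fun x => π (p x)) hV (Set.mapsTo_univ _ _)
      (fun j => hp (Fin.castAdd k j))
    exact this
  · intro hA
    apply hf2
    refine ⟨hf1.1, ?_⟩
    intro V q hV _ hq
    set p : Euc n → Euc (n + k) := fun x =>
      (WithLp.equiv 2 (Fin (n+k) → ℝ)).symm
        (Fin.addCases (motive := fun _ => ℝ) (fun i => q x i) (fun _ => 0)) with hp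
    have hcomp : ftil ∘ p = f ∘ q := by
      funext x
      show f ((WithLp.equiv 2 (Fin n → ℝ)).symm fun i : Fin n => p x (Fin.castAdd k i)) = f (q x)
      congr 1
      ext i
      show (Fin.addCases (motive := fun _ => ℝ) (fun i => q x i) (fun _ => 0)) (Fin.castAdd k i) = q x i
      simp
    have hpj : ∀ j : Fin (n + k), Roumieu M V (fun x => p x j) := by
      intro j
      refine Fin.addCases (motive := fun j => Roumieu M V (fun x => p x j)) ?_ ?_ j
      · intro i
        have : (fun x => p x (Fin.castAdd k i)) = fun x => q x i := by
          funext x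
          show (Fin.addCases (motive := fun _ => ℝ) (fun i => q x i) (fun _ => 0)) (Fin.castAdd k i) = q x i
          simp
        rw [this]
        exact hq i
      · intro i
        have : (fun x => p x (Fin.natAdd n i)) = fun _ => (0:ℝ) := by
          funext x
          show (Fin.addCases (motive := fun _ => ℝ) (fun i => q x i) (fun _ => 0)) (Fin.natAdd n i) = 0
          simp
        rw [this]
        exact roumieu_zero M V
    have := hA.2 V p hV (Set.mapsTo_univ _ _) hpj
    rwa [hcomp] at this
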